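/- arXiv:1512.06502 — 2 statements merged into one kernel-verified Lean document; each statement's English description precedes it below -/
import Mathlib

section
/- Let F be the (unnormalized) N×N DFT matrix with entries F_{r,c} = e^{-2πi rc/N}, where N = LM. Fix l ∈ {0,...,L-1} and a set J of column indices j_0 < j_1 < ... < j_{K-1} in {0,...,N-1}. Let F̃_l be the M×K matrix with entries (F̃_l)_{r,q} = e^{-2πi (l + rL) j_q / N}. Let κ be the number of distinct residues of the j_q modulo M. Then rank(F̃_l) = κ. -/
open Complex Finset Matrix

theorem rank_extracted_dft (L M K : ℕ) (hL : 0 < L) (hM : 0 < M) (hK : 0 < K)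
    (l : Fin L) (j : Fin K → Fin (L * M)) (hj : StrictMono j)
    (Ft : Matrix (Fin M) (Fin K) ℂ)
    (hFt : ∀ (r : Fin M) (q : Fin K),
      Ft r q = Complex.exp (-2 * Real.pi * I * ((l : ℂ) + (r : ℂ) * L) * ((j q : ℕ) : ℂ)
        / ((L * M : ℕ) : ℂ))) :
    Ft.rank = (Finset.univ.image (fun q : Fin K => (j q : ℕ) % M)).card := by
  have hM0 : (M : ℂ) ≠ 0 := Nat.cast_ne_zero.mpr hM.ne'
  have hL0 : (L : ℂ) ≠ 0 := Nat.cast_ne_zero.mpr hL.ne'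
  have hpi : (2 : ℂ) * Real.pi * I ≠ 0 := by
    simp [Real.pi_ne_zero, Complex.I_ne_zero, Complex.ofReal_ne_zero]
  set v : Fin M → ℂ := fun s => Complex.exp (-2 * Real.pi * I * (s : ℕ) / M) with hv
  set w : Fin M → (Fin M → ℂ) := fun s r => v s ^ (r : ℕ) with hw
  -- injectivity of v
  have hvinj : Function.Injective v := by
    intro s t hst
    rw [hv] at hst
    simp only at hst
    rw [Complex.exp_eq_exp_iff_exists_int] at hst
    obtain ⟨n, hn⟩ := hst
    have key : ((s : ℕ) : ℂ) = ((t : ℕ) : ℂ) - (n : ℂ) * M := by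
      have h2 : ((-2 * Real.pi * I) * M) * (((s : ℕ) : ℂ) - (((t : ℕ) : ℂ) - (n : ℂ) * M)) = 0 := by
        field_simp at hn
        linear_combination (2 * Real.pi * I * M) * hn
      rcases mul_eq_zero.mp h2 with h | h
      · exfalso
        rcases mul_eq_zero.mp h with h' | h'
        · exact hpi (by linear_combination -h')
        · exact hM0 h'
      · linear_combination h
    have keyZ : ((s : ℕ) : ℤ) = ((t : ℕ) : ℤ) - n * M := by exact_mod_cast key
    have hs' : ((s : ℕ) : ℤ) < M := by exact_mod_cast s.isLt
    have ht' : ((t : ℕ) : ℤ) < M := by exact_mod_cast t.isLt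
    have hs0 : (0 : ℤ) ≤ ((s : ℕ) : ℤ) := Int.natCast_nonneg _
    have ht0 : (0 : ℤ) ≤ ((t : ℕ) : ℤ) := Int.natCast_nonneg _
    have hM' : (0 : ℤ) < M := by exact_mod_cast hM
    have hn0 : n = 0 := by
      rcases lt_trichotomy n 0 with h | h | h
      · have : n ≤ -1 := by omega
        nlinarith
      · exact h
      · have : 1 ≤ n := by omega
        nlinarith
    rw [hn0] at keyZ
    simp only [Int.cast_zero, zero_mul, sub_zero] at keyZ
    apply Fin.ext
    omega
  -- linear independence of w
  have hwind : LinearIndependent ℂ w := by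
    have : w = fun s => (Matrix.vandermonde v) s := by
      funext s r; rfl
    rw [this]
    exact Matrix.linearIndependent_rows_iff_isUnit.mpr
      ((Matrix.isUnit_iff_isUnit_det _).mpr
        (isUnit_iff_ne_zero.mpr (Matrix.det_vandermonde_ne_zero_iff.mpr hvinj)))
  set res : Fin K → Fin M := fun q => ⟨(j q : ℕ) % M, Nat.mod_lt _ hM⟩ with hres
  set c : Fin K → ℂ := fun q => Complex.exp (-2 * Real.pi * I * (l : ℕ) * ((j q : ℕ) : ℂ) / ((L : ℂ) * M)) with hcdef
  have hc : ∀ q, c q ≠ 0 := fun q => Complex.exp_ne_zero _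
  -- column decomposition
  have hcol : ∀ q, Ftᵀ q = c q • w (res q) := by
    intro q
    funext r
    obtain ⟨d, hd⟩ : ∃ d : ℕ, (j q : ℕ) = M * d + (j q : ℕ) % M :=
      ⟨(j q : ℕ) / M, (Nat.div_add_mod _ _).symm⟩
    have hdm : ((j q : ℕ) : ℂ) = (M : ℂ) * (d : ℂ) + (((j q : ℕ) % M : ℕ) : ℂ) := by
      exact_mod_cast congrArg (Nat.cast : ℕ → ℂ) hd
    show Ft r q = c q * w (res q) r
    rw [hFt, hw, hcdef, hv]
    simp only [hres]
    rw [← Complex.exp_nat_mul, ← Complex.exp_add]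
    have hexp : -2 * Real.pi * I * ((l : ℂ) + (r : ℂ) * L) * ((j q : ℕ) : ℂ) / ((L * M : ℕ) : ℂ)
        = ((-(((r : ℕ) * d : ℕ)) : ℤ) : ℂ) * (2 * Real.pi * I)
          + (-2 * Real.pi * I * ((l : ℕ) : ℂ) * ((j q : ℕ) : ℂ) / ((L : ℂ) * M)
            + ((r : ℕ) : ℂ) * (-2 * Real.pi * I * (((j q : ℕ) % M : ℕ) : ℂ) / M)) := by
      rw [hdm]
      push_cast
      field_simp
      ring
    rw [hexp, Complex.exp_add, Complex.exp_int_mul_two_pi_mul_I, one_mul]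
  set S : Finset (Fin M) := Finset.image res Finset.univ with hS
  have hspan : Submodule.span ℂ (Set.range Ftᵀ) = Submodule.span ℂ (w '' ↑S) := by
    apply le_antisymm <;> rw [Submodule.span_le]
    · rintro _ ⟨q, rfl⟩
      rw [hcol q]
      exact Submodule.smul_mem _ _ (Submodule.subset_span ⟨res q, by simp [hS], rfl⟩)
    · rintro _ ⟨s, hs, rfl⟩
      simp only [hS, Finset.coe_image, Finset.coe_univ, Set.image_univ, Set.mem_range] at hs
      obtain ⟨q, rfl⟩ := hs
      have hwq : w (res q) = (c q)⁻¹ • Ftᵀ q := by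
        rw [hcol q, smul_smul, inv_mul_cancel₀ (hc q), one_smul]
      rw [hwq]
      exact Submodule.smul_mem _ _ (Submodule.subset_span ⟨q, rfl⟩)
  have hfin : Module.finrank ℂ (Submodule.span ℂ (w '' ↑S)) = S.card := by
    have h1 : LinearIndependent ℂ (fun s : {x // x ∈ S} => w s) :=
      hwind.comp _ Subtype.coe_injective
    have h2 : (w '' ↑S) = Set.range (fun s : {x // x ∈ S} => w s) := by
      ext x
      simp only [Set.mem_image, Set.mem_range, Subtype.exists, Finset.mem_coe]
      tauto
    rw [h2, finrank_span_eq_card h1, Fintype.card_coe]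
  have hcard : (Finset.univ.image (fun q : Fin K => (j q : ℕ) % M)).card = S.card := by
    have himg : Finset.univ.image (fun q : Fin K => (j q : ℕ) % M) = Finset.image Fin.val S := by
      rw [hS, Finset.image_image]
      rfl
    rw [himg, Finset.card_image_of_injective _ Fin.val_injective]
  rw [Matrix.rank_eq_finrank_span_cols]
  show Module.finrank ℂ (Submodule.span ℂ (Set.range Ftᵀ)) = _
  rw [hspan, hfin, hcard]
end

section
/- Let A be a blocked pseudo-circulant channel matrix: 𝓗(z) is the M×M matrix whose (r,c) entry is H̃_{(r-c) mod M}(z) multiplied by z^{-1} when r < c, where H̃_m(z) = Σ_k h_{kM+m} z^{-k} are the polyphase components of H(z) = Σ_d h_d z^{-d}. Then for z = e^{2πi l/L} and N = LM, the matrix 𝓗_l = 𝓗(e^{2πi l/L}) satisfies the diagonalization 𝓗_l = U_lᴴ H_l U_l, where U_l has entries (U_l)_{r,c} = (1/√M) e^{-2πi (l + rL) c / N} and H_l = diag(H_l, H_{l+L}, ..., H_{l+(M-1)L}) with H_n = Σ_d h_d e^{-2πi n d / N}. -/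
open Matrix Complex Finset

lemma exp_sum_orth (M : ℕ) (hM : 0 < M) (t : ℤ) :
    ∑ m ∈ Finset.range M, Complex.exp (-2 * Real.pi * I * m * t / M)
      = if (M:ℤ) ∣ t then (M:ℂ) else 0 := by
  have hMC : (M:ℂ) ≠ 0 := Nat.cast_ne_zero.mpr hM.ne'
  have hπ : (Real.pi : ℂ) ≠ 0 := Complex.ofReal_ne_zero.mpr Real.pi_ne_zero
  have hterm : ∀ m : ℕ, Complex.exp (-2 * Real.pi * I * m * t / M)
      = Complex.exp (-2 * Real.pi * I * t / M) ^ m := by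
    intro m
    rw [← Complex.exp_nat_mul]
    congr 1
    ring
  simp only [hterm]
  set ω := Complex.exp (-2 * Real.pi * I * t / M) with hω
  by_cases hdvd : (M:ℤ) ∣ t
  · obtain ⟨k, hk⟩ := hdvd
    have hω1 : ω = 1 := by
      rw [hω]
      have he : (-2 * Real.pi * I * t / M : ℂ) = ((-k : ℤ) : ℂ) * (2 * Real.pi * I) := by
        have : (t : ℂ) = (M : ℂ) * (k : ℂ) := by exact_mod_cast congrArg Int.cast hk
        rw [this]
        push_cast
        field_simp
      rw [he, Complex.exp_int_mul_two_pi_mul_I]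
    rw [if_pos ⟨k, hk⟩]
    simp [hω1]
  · have hω1 : ω ≠ 1 := by
      intro hcontra
      rw [hω, Complex.exp_eq_one_iff] at hcontra
      obtain ⟨n, hn⟩ := hcontra
      apply hdvd
      refine ⟨-n, ?_⟩
      have h2 : (t : ℂ) = ((M : ℤ) * -n : ℤ) := by
        have h2πI : (2 * Real.pi * I : ℂ) ≠ 0 := by
          simp [Real.pi_ne_zero, Complex.I_ne_zero]
        field_simp at hn
        push_cast
        have : (2 * Real.pi * I : ℂ) * (t : ℂ) = (2 * Real.pi * I : ℂ) * (-(n : ℂ) * M) := by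
          linear_combination (-(2 * Real.pi * I : ℂ)) * hn
        have h3 := mul_left_cancel₀ h2πI this
        linear_combination h3
      exact_mod_cast h2
    rw [geom_sum_eq hω1]
    have hωM : ω ^ M = 1 := by
      rw [hω, ← Complex.exp_nat_mul]
      have he : (M : ℂ) * (-2 * Real.pi * I * t / M) = ((-t : ℤ) : ℂ) * (2 * Real.pi * I) := by
        field_simp
        push_cast; ring
      rw [he, Complex.exp_int_mul_two_pi_mul_I]
    simp [hωM, if_neg hdvd]

theorem vofdm_blocked_channel_diagonalization (L M : ℕ) (hL : 0 < L) (hM : 0 < M)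
    (h : ℕ → ℂ) (D : ℕ) (hD : D < L * M) (hsupp : ∀ d : ℕ, D < d → h d = 0)
    (l : Fin L)
    (H : ℕ → ℂ)
    (hH : ∀ nn : ℕ, H nn = ∑ d ∈ Finset.range (L * M),
        h d * Complex.exp (-2 * Real.pi * I * nn * d / (L * M)))
    (𝓗 : Matrix (Fin M) (Fin M) ℂ)
    (h𝓗 : ∀ r c : Fin M,
      𝓗 r c = (if (r : ℕ) < (c : ℕ)
            then Complex.exp (-2 * Real.pi * I * (l : ℂ) / L) else 1) *
          ∑ k ∈ Finset.range L,
            h (k * M + (((r : ℤ) - (c : ℤ)) % (M : ℤ)).toNat) *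
              Complex.exp (-2 * Real.pi * I * (l : ℂ) * k / L))
    (U : Matrix (Fin M) (Fin M) ℂ)
    (hU : ∀ r c : Fin M,
      U r c = (1 / (Real.sqrt M : ℂ)) *
        Complex.exp (-2 * Real.pi * I * ((l : ℂ) + (r : ℂ) * L) * (c : ℂ) / (L * M))) :
    𝓗 = Uᴴ * Matrix.diagonal (fun m : Fin M => H ((l : ℕ) + (m : ℕ) * L)) * U := by
  have hLC : (L:ℂ) ≠ 0 := Nat.cast_ne_zero.mpr hL.ne'
  have hMC : (M:ℂ) ≠ 0 := Nat.cast_ne_zero.mpr hM.ne'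
  have hMZ : (M:ℤ) ≠ 0 := by exact_mod_cast hM.ne'
  have hsq : (Real.sqrt M : ℂ) * (Real.sqrt M : ℂ) = (M:ℂ) := by
    rw [← Complex.ofReal_mul, Real.mul_self_sqrt (Nat.cast_nonneg M)]
    norm_cast
  have hsq0 : (Real.sqrt M : ℂ) ≠ 0 := by
    intro h0
    rw [h0, mul_zero] at hsq
    exact hMC hsq.symm
  ext r c
  -- abbreviations
  have hstar : ∀ j : Fin M, star (U j r) = (1 / (Real.sqrt M : ℂ)) *
      Complex.exp (2 * Real.pi * I * ((l : ℂ) + (j : ℂ) * L) * (r : ℂ) / ((L:ℂ) * M)) := by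
    intro j
    rw [hU, star_mul', Complex.star_def, ← Complex.exp_conj]
    congr 1
    · simp [Complex.star_def, Complex.conj_ofReal]
    · congr 1
      simp only [map_div₀, _root_.map_mul, map_add, map_neg, map_ofNat, Complex.conj_I,
        Complex.conj_ofReal, map_natCast]
      ring
  have key : ∀ j : Fin M,
      star (U j r) * H ((l:ℕ) + (j:ℕ) * L) * U j c
        = ∑ d ∈ Finset.range (L*M), (1/(M:ℂ)) * h d *
            Complex.exp (-2 * Real.pi * I * (l:ℂ) *
              ((((d:ℤ) + (c:ℤ) - (r:ℤ)) : ℤ) : ℂ) / ((L:ℂ) * M)) *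
            Complex.exp (-2 * Real.pi * I * (j:ℂ) *
              ((((d:ℤ) + (c:ℤ) - (r:ℤ)) : ℤ) : ℂ) / M) := by
    intro j
    rw [hstar j, hU j c, hH]
    rw [Finset.mul_sum, Finset.sum_mul]
    refine Finset.sum_congr rfl fun d hd => ?_
    have hcast : ((((l:ℕ) + (j:ℕ) * L : ℕ)) : ℂ) = (l:ℂ) + (j:ℂ) * L := by push_cast; ring
    have hcoef : (1:ℂ)/(Real.sqrt M : ℂ) * (1/(Real.sqrt M : ℂ)) = 1/(M:ℂ) := by
      rw [div_mul_div_comm, one_mul, hsq]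
    have hexp : Complex.exp (2 * Real.pi * I * ((l : ℂ) + (j : ℂ) * L) * (r : ℂ) / ((L:ℂ) * M)) *
        Complex.exp (-2 * Real.pi * I * (((l:ℕ) + (j:ℕ) * L : ℕ) : ℂ) * (d:ℂ) / ((L:ℂ) * (M:ℂ))) *
        Complex.exp (-2 * Real.pi * I * ((l : ℂ) + (j : ℂ) * L) * (c : ℂ) / ((L:ℂ) * M))
        = Complex.exp (-2 * Real.pi * I * (l:ℂ) *
              ((((d:ℤ) + (c:ℤ) - (r:ℤ)) : ℤ) : ℂ) / ((L:ℂ) * M)) *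
          Complex.exp (-2 * Real.pi * I * (j:ℂ) *
              ((((d:ℤ) + (c:ℤ) - (r:ℤ)) : ℤ) : ℂ) / M) := by
      rw [← Complex.exp_add, ← Complex.exp_add, ← Complex.exp_add]
      congr 1
      rw [hcast]
      push_cast
      field_simp
      ring
    calc (1 / (Real.sqrt M : ℂ)) *
          Complex.exp (2 * Real.pi * I * ((l : ℂ) + (j : ℂ) * L) * (r : ℂ) / ((L:ℂ) * M)) *
          (h d * Complex.exp (-2 * Real.pi * I * (((l:ℕ) + (j:ℕ) * L : ℕ) : ℂ) * (d:ℂ) / ((L:ℂ) * (M:ℂ)))) *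
          ((1 / (Real.sqrt M : ℂ)) *
          Complex.exp (-2 * Real.pi * I * ((l : ℂ) + (j : ℂ) * L) * (c : ℂ) / ((L:ℂ) * M)))
        = ((1:ℂ)/(Real.sqrt M : ℂ) * (1/(Real.sqrt M : ℂ))) * h d *
          (Complex.exp (2 * Real.pi * I * ((l : ℂ) + (j : ℂ) * L) * (r : ℂ) / ((L:ℂ) * M)) *
           Complex.exp (-2 * Real.pi * I * (((l:ℕ) + (j:ℕ) * L : ℕ) : ℂ) * (d:ℂ) / ((L:ℂ) * (M:ℂ))) *
           Complex.exp (-2 * Real.pi * I * ((l : ℂ) + (j : ℂ) * L) * (c : ℂ) / ((L:ℂ) * M))) := by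
          ring
      _ = (1/(M:ℂ)) * h d *
          (Complex.exp (-2 * Real.pi * I * (l:ℂ) *
              ((((d:ℤ) + (c:ℤ) - (r:ℤ)) : ℤ) : ℂ) / ((L:ℂ) * M)) *
          Complex.exp (-2 * Real.pi * I * (j:ℂ) *
              ((((d:ℤ) + (c:ℤ) - (r:ℤ)) : ℤ) : ℂ) / M)) := by rw [hcoef, hexp]
      _ = _ := by ring
  -- facts about q
  set q : ℕ := (((r : ℤ) - (c : ℤ)) % (M : ℤ)).toNat with hqdef
  have hq : (q:ℤ) = ((r:ℤ) - (c:ℤ)) % (M:ℤ) :=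
    Int.toNat_of_nonneg (Int.emod_nonneg _ hMZ)
  have hMpos : (0:ℤ) < (M:ℤ) := by exact_mod_cast hM
  have hqltZ : (q:ℤ) < (M:ℤ) := by rw [hq]; exact Int.emod_lt_of_pos _ hMpos
  have hqlt : q < M := by exact_mod_cast hqltZ
  have hrZ : (r:ℤ) < (M:ℤ) := by exact_mod_cast r.isLt
  have hcZ : (c:ℤ) < (M:ℤ) := by exact_mod_cast c.isLt
  have hrZ0 : (0:ℤ) ≤ (r:ℤ) := by positivity
  have hcZ0 : (0:ℤ) ≤ (c:ℤ) := by positivity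
  have hqe : (q:ℤ) + (c:ℤ) - (r:ℤ) = (if (r:ℕ) < (c:ℕ) then 1 else 0) * (M:ℤ) := by
    split_ifs with hrc
    · have hrcZ : (r:ℤ) < (c:ℤ) := by exact_mod_cast hrc
      have hmod : ((r:ℤ) - (c:ℤ)) % (M:ℤ) = (r:ℤ) - (c:ℤ) + (M:ℤ) := by
        conv_lhs => rw [show (r:ℤ) - (c:ℤ) = ((r:ℤ) - (c:ℤ) + (M:ℤ)) + (M:ℤ) * (-1) by ring]
        rw [Int.add_mul_emod_self_left]
        exact Int.emod_eq_of_lt (by omega) (by omega)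
      rw [hq, hmod]; ring
    · have hrcZ : (c:ℤ) ≤ (r:ℤ) := by
        have : (c:ℕ) ≤ (r:ℕ) := Nat.le_of_not_lt hrc
        exact_mod_cast this
      have hmod : ((r:ℤ) - (c:ℤ)) % (M:ℤ) = (r:ℤ) - (c:ℤ) :=
        Int.emod_eq_of_lt (by omega) (by omega)
      rw [hq, hmod]; ring
  -- right hand side computation
  have step_rhs : (Uᴴ * Matrix.diagonal (fun m : Fin M => H ((l : ℕ) + (m : ℕ) * L)) * U) r c
      = ∑ d ∈ (Finset.range (L*M)).filter (fun d : ℕ => (M:ℤ) ∣ ((d:ℤ) + (c:ℤ) - (r:ℤ))),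
          h d * Complex.exp (-2 * Real.pi * I * (l:ℂ) *
              ((((d:ℤ) + (c:ℤ) - (r:ℤ)) : ℤ) : ℂ) / ((L:ℂ) * M)) := by
    rw [Matrix.mul_assoc, Matrix.mul_apply]
    simp only [Matrix.diagonal_mul, Matrix.conjTranspose_apply]
    calc ∑ j : Fin M, star (U j r) * (H ((l:ℕ) + (j:ℕ) * L) * U j c)
        = ∑ j : Fin M, ∑ d ∈ Finset.range (L*M), (1/(M:ℂ)) * h d *
            Complex.exp (-2 * Real.pi * I * (l:ℂ) *
              ((((d:ℤ) + (c:ℤ) - (r:ℤ)) : ℤ) : ℂ) / ((L:ℂ) * M)) *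
            Complex.exp (-2 * Real.pi * I * (j:ℂ) *
              ((((d:ℤ) + (c:ℤ) - (r:ℤ)) : ℤ) : ℂ) / M) := by
          refine Finset.sum_congr rfl fun j _ => ?_
          rw [← mul_assoc]
          exact key j
      _ = ∑ d ∈ Finset.range (L*M), ∑ j : Fin M, (1/(M:ℂ)) * h d *
            Complex.exp (-2 * Real.pi * I * (l:ℂ) *
              ((((d:ℤ) + (c:ℤ) - (r:ℤ)) : ℤ) : ℂ) / ((L:ℂ) * M)) *
            Complex.exp (-2 * Real.pi * I * (j:ℂ) *
              ((((d:ℤ) + (c:ℤ) - (r:ℤ)) : ℤ) : ℂ) / M) := Finset.sum_comm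
      _ = ∑ d ∈ Finset.range (L*M),
            (if (M:ℤ) ∣ ((d:ℤ) + (c:ℤ) - (r:ℤ)) then
              h d * Complex.exp (-2 * Real.pi * I * (l:ℂ) *
              ((((d:ℤ) + (c:ℤ) - (r:ℤ)) : ℤ) : ℂ) / ((L:ℂ) * M)) else 0) := by
          refine Finset.sum_congr rfl fun d _ => ?_
          rw [← Finset.mul_sum]
          rw [Fin.sum_univ_eq_sum_range (fun j => Complex.exp (-2 * Real.pi * I * (j:ℂ) *
              ((((d:ℤ) + (c:ℤ) - (r:ℤ)) : ℤ) : ℂ) / M)) M]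
          rw [exp_sum_orth M hM ((d:ℤ) + (c:ℤ) - (r:ℤ))]
          rw [mul_ite, mul_zero]
          split_ifs
          · field_simp
          · rfl
      _ = _ := (Finset.sum_filter _ _).symm
  rw [h𝓗, step_rhs, Finset.mul_sum]
  refine Finset.sum_nbij' (fun k => k * M + q) (fun d => d / M) ?_ ?_ ?_ ?_ ?_
  · intro k hk
    rw [Finset.mem_range] at hk
    rw [Finset.mem_filter, Finset.mem_range]
    constructor
    · calc k * M + q < k * M + M := Nat.add_lt_add_left hqlt _
        _ = (k+1) * M := by ring
        _ ≤ L * M := Nat.mul_le_mul_right M (by omega)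
    · refine ⟨(k:ℤ) + (if (r:ℕ) < (c:ℕ) then 1 else 0), ?_⟩
      push_cast
      linear_combination hqe
  · intro d hd
    rw [Finset.mem_filter, Finset.mem_range] at hd
    rw [Finset.mem_range]
    exact (Nat.div_lt_iff_lt_mul hM).mpr hd.1
  · intro k hk
    rw [mul_comm k M, Nat.mul_add_div hM, Nat.div_eq_of_lt hqlt, add_zero]
  · intro d hd
    rw [Finset.mem_filter, Finset.mem_range] at hd
    obtain ⟨hdlt, e, he⟩ := hd
    have hdZ : (d:ℤ) = ((r:ℤ) - (c:ℤ)) + (M:ℤ) * e := by linarith [he]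
    have h1 : (d:ℤ) % (M:ℤ) = (q:ℤ) := by
      rw [hdZ, Int.add_mul_emod_self_left, ← hq]
    have h2 : d % M = q := by
      have : ((d % M : ℕ) : ℤ) = (q:ℤ) := by push_cast; exact h1
      exact_mod_cast this
    conv_rhs => rw [← Nat.div_add_mod d M]
    rw [h2]; ring
  · intro k hk
    have htk : (((k * M + q : ℕ)):ℤ) + (c:ℤ) - (r:ℤ)
        = ((k:ℤ) + (if (r:ℕ) < (c:ℕ) then 1 else 0)) * (M:ℤ) := by
      push_cast
      linear_combination hqe
    rw [htk]
    split_ifs with hrc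
    · have hx : Complex.exp (-2 * Real.pi * I * (l:ℂ) / L) *
          Complex.exp (-2 * Real.pi * I * (l:ℂ) * (k:ℂ) / L)
          = Complex.exp (-2 * Real.pi * I * (l:ℂ) *
              ((((k:ℤ) + 1) * (M:ℤ) : ℤ) : ℂ) / ((L:ℂ) * M)) := by
        rw [← Complex.exp_add]
        congr 1
        push_cast
        field_simp
        ring
      rw [← hx]
      ring
    · have hx : Complex.exp (-2 * Real.pi * I * (l:ℂ) * (k:ℂ) / L)
          = Complex.exp (-2 * Real.pi * I * (l:ℂ) *
              ((((k:ℤ) + 0) * (M:ℤ) : ℤ) : ℂ) / ((L:ℂ) * M)) := by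
        congr 1
        push_cast
        field_simp
        ring
      rw [← hx]
      ring
end
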